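/- Let H be a Hopf algebra over a field k and let c be a central element of H satisfying: (i) for every finite-dimensional simple left H-module V, c acts as zero on V if and only if V is isomorphic to the trivial module; and (ii) every finite-dimensional left H-module E containing a submodule W such that both W and E/W are isomorphic to the trivial module decomposes as an internal direct sum of W and another submodule. If V is a finite-dimensional left H-module and W ⊆ V is any submodule such that V/W is isomorphic to the trivial module, then there exists a submodule W' ⊆ V with W ∩ W' = 0 and W + W' = V. -/

import Mathlib

universe u

/-- `V` is isomorphic to the trivial `H`-module, i.e. to `k` with action `h • x = ε(h) x`. -/
def IsTrivialRep (k H : Type*) (V : Type*) [Field k] [Ring H] [HopfAlgebra k H]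
    [AddCommGroup V] [Module k V] [Module H V] : Prop :=
  ∃ e : V ≃ₗ[k] k, ∀ (h : H) (v : V), e (h • v) = Coalgebra.counit (R := k) h * e v

section Helpers

variable (k H : Type u) [Field k] [Ring H] [HopfAlgebra k H]

theorem fd_sub (V : Type u) [AddCommGroup V] [Module k V] [Module H V] [IsScalarTower k H V]
    [FiniteDimensional k V] (W : Submodule H V) : FiniteDimensional k ↥W :=
  ((Submodule.restrictScalarsEquiv k H V W).restrictScalars k).finiteDimensional

theorem fd_quot (V : Type u) [AddCommGroup V] [Module k V] [Module H V] [IsScalarTower k H V]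
    [FiniteDimensional k V] (W : Submodule H V) : FiniteDimensional k (V ⧸ W) :=
  (Submodule.Quotient.restrictScalarsEquiv k W).finiteDimensional

theorem finrank_restrict (V : Type u) [AddCommGroup V] [Module k V] [Module H V]
    [IsScalarTower k H V] (W : Submodule H V) :
    Module.finrank k ↥(W.restrictScalars k) = Module.finrank k ↥W :=
  ((Submodule.restrictScalarsEquiv k H V W).restrictScalars k).finrank_eq

theorem trivial_of_equiv (A B : Type u) [AddCommGroup A] [Module k A] [Module H A]
    [IsScalarTower k H A] [AddCommGroup B] [Module k B] [Module H B] [IsScalarTower k H B]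
    (e : A ≃ₗ[H] B) (hB : IsTrivialRep k H B) : IsTrivialRep k H A := by
  obtain ⟨f, hf⟩ := hB
  exact ⟨(e.restrictScalars k).trans f, fun h a => by
    simp only [LinearEquiv.trans_apply, LinearEquiv.restrictScalars_apply, map_smul, hf]⟩

theorem isSimple_of_trivial (A : Type u) [AddCommGroup A] [Module k A] [Module H A]
    [IsScalarTower k H A] (hA : IsTrivialRep k H A) : IsSimpleModule H A := by
  obtain ⟨e, -⟩ := hA
  haveI : IsSimpleModule k A := IsSimpleModule.congr e
  haveI : Nontrivial A := e.toEquiv.nontrivial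
  rw [isSimpleModule_iff]; constructor
  intro p
  rcases (inferInstance : IsSimpleOrder (Submodule k A)).eq_bot_or_eq_top
    (p.restrictScalars k) with h | h
  · exact Or.inl ((Submodule.restrictScalars_eq_bot_iff k H A).mp h)
  · exact Or.inr ((Submodule.restrictScalars_eq_top_iff k H A).mp h)

theorem restrict_lt (V : Type u) [AddCommGroup V] [Module k V] [Module H V]
    [IsScalarTower k H V] {p q : Submodule H V} (h : p < q) :
    p.restrictScalars k < q.restrictScalars k :=
  lt_of_le_of_ne (fun x hx => h.le hx)
    (fun hh => h.ne (Submodule.restrictScalars_injective k H V hh))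

theorem aux (c : H) (hc : ∀ h : H, c * h = h * c)
    (hCasimir : ∀ (V : Type u) [AddCommGroup V] [Module k V] [Module H V]
      [IsScalarTower k H V] [FiniteDimensional k V] [IsSimpleModule H V],
      (∀ v : V, c • v = 0) ↔ IsTrivialRep k H V)
    (hExt : ∀ (E : Type u) [AddCommGroup E] [Module k E] [Module H E]
      [IsScalarTower k H E] [FiniteDimensional k E] (W : Submodule H E),
      IsTrivialRep k H W → IsTrivialRep k H (E ⧸ W) →
      ∃ W' : Submodule H E, W ⊓ W' = ⊥ ∧ W ⊔ W' = ⊤) :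
    ∀ (n : ℕ) (V : Type u) [AddCommGroup V] [Module k V] [Module H V]
      [IsScalarTower k H V] [FiniteDimensional k V] (W : Submodule H V),
      Module.finrank k ↥W = n → IsTrivialRep k H (V ⧸ W) →
      ∃ W' : Submodule H V, W ⊓ W' = ⊥ ∧ W ⊔ W' = ⊤ := by
  intro n
  induction n using Nat.strong_induction_on with
  | _ n IH =>
  intro V _ _ _ _ _ W hrank hquot
  haveI := fd_sub k H V W
  haveI := fd_quot k H V W
  by_cases hbot : W = ⊥
  · exact ⟨⊤, by simp [hbot]⟩
  by_cases hatom : IsAtom W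
  · -- W is simple
    haveI : IsSimpleModule H ↥W := isSimpleModule_iff_isAtom.mpr hatom
    by_cases hczero : ∀ w : ↥W, c • w = 0
    · exact hExt V W ((hCasimir ↥W).mp hczero) hquot
    · push_neg at hczero
      obtain ⟨w₀, hw₀⟩ := hczero
      -- the Casimir action as an H-linear endomorphism of V
      let φ : V →ₗ[H] V :=
        { toFun := fun v => c • v
          map_add' := fun x y => smul_add c x y
          map_smul' := fun h v => by
            show c • h • v = h • c • v
            rw [smul_smul, smul_smul, hc] }
      haveI : IsSimpleModule H (V ⧸ W) := isSimple_of_trivial k H _ hquot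
      have hcq : ∀ x : V ⧸ W, c • x = 0 := (hCasimir (V ⧸ W)).mpr hquot
      have hrange : LinearMap.range φ ≤ W := by
        rintro _ ⟨v, rfl⟩
        have : W.mkQ (c • v) = 0 := (map_smul W.mkQ c v).trans (hcq _)
        exact (Submodule.Quotient.mk_eq_zero W).mp this
      have hw₀V : c • (w₀ : V) ≠ 0 := by
        intro heq
        apply hw₀
        exact Subtype.ext (by simpa using heq)
      have hmapW : W.map φ = W := by
        rcases (Submodule.map_le_iff_le_comap.mpr
          (fun x hx => hrange ⟨x, rfl⟩) : W.map φ ≤ W).lt_or_eq with h | h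
        · exfalso
          have : W.map φ = ⊥ := hatom.2 _ h
          apply hw₀V
          have : φ (w₀ : V) ∈ W.map φ := Submodule.mem_map_of_mem w₀.2
          rw [‹W.map φ = ⊥›] at this
          exact (Submodule.mem_bot H).mp this
        · exact h
      have hrangeW : LinearMap.range φ = W := by
        refine le_antisymm hrange ?_
        rw [← hmapW]
        exact LinearMap.map_le_range
      set K := LinearMap.ker φ with hK
      have hdisj : W ⊓ K = ⊥ := by
        rcases (inf_le_left : W ⊓ K ≤ W).lt_or_eq with h | h
        · exact hatom.2 _ h
        · exfalso
          apply hw₀V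
          have : (w₀ : V) ∈ K := (inf_eq_left.mp h) w₀.2
          exact this
      refine ⟨K, hdisj, ?_⟩
      -- dimension count over k
      have hrn := LinearMap.finrank_range_add_finrank_ker (φ.restrictScalars k)
      have hker : LinearMap.ker (φ.restrictScalars k) = K.restrictScalars k := by
        ext x; simp [φ, hK]
      have hrg : LinearMap.range (φ.restrictScalars k) = W.restrictScalars k := by
        rw [← hrangeW]; ext x; simp [φ]
      rw [hker, hrg, finrank_restrict, finrank_restrict] at hrn
      have htop : W.restrictScalars k ⊔ K.restrictScalars k = ⊤ := by
        apply Submodule.eq_top_of_disjoint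
        · rw [finrank_restrict, finrank_restrict]; exact hrn.ge
        · rw [disjoint_iff, eq_bot_iff]
          intro x hx
          have : x ∈ W ⊓ K := ⟨hx.1, hx.2⟩
          rw [hdisj] at this
          exact this
      rw [eq_top_iff]
      intro x _
      have : x ∈ W.restrictScalars k ⊔ K.restrictScalars k := htop ▸ Submodule.mem_top
      obtain ⟨a, ha, b, hb, rfl⟩ := Submodule.mem_sup.mp this
      exact Submodule.add_mem_sup ha hb
  · -- W is neither ⊥ nor an atom: pick a proper nonzero submodule W₁ < W
    rw [IsAtom] at hatom
    push_neg at hatom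
    obtain ⟨W₁, hW₁lt, hW₁ne⟩ := hatom hbot
    haveI := fd_quot k H V W₁
    haveI := fd_sub k H V W₁
    set Wb := W.map W₁.mkQ with hWb
    have hquot' : IsTrivialRep k H ((V ⧸ W₁) ⧸ Wb) :=
      trivial_of_equiv k H _ _ (Submodule.quotientQuotientEquivQuotient W₁ W hW₁lt.le) hquot
    -- rank of Wb is < n
    have hWbrank : Module.finrank k ↥Wb < n := by
      let g : ↥W →ₗ[H] V ⧸ W₁ := W₁.mkQ ∘ₗ W.subtype
      have hgr : LinearMap.range g = Wb := by
        rw [hWb]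
        ext x
        constructor
        · rintro ⟨⟨y, hy⟩, rfl⟩; exact ⟨y, hy, rfl⟩
        · rintro ⟨y, hy, rfl⟩; exact ⟨⟨y, hy⟩, rfl⟩
      have hrn := LinearMap.finrank_range_add_finrank_ker (g.restrictScalars k)
      have hrg : LinearMap.range (g.restrictScalars k) = (LinearMap.range g).restrictScalars k := by
        ext x; simp
      have hkerpos : 0 < Module.finrank k ↥(LinearMap.ker (g.restrictScalars k)) := by
        obtain ⟨x, hx, hx0⟩ := Submodule.exists_mem_ne_zero_of_ne_bot hW₁ne
        have hxW : x ∈ W := hW₁lt.le hx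
        rw [Module.finrank_pos_iff]
        refine ⟨⟨⟨⟨x, hxW⟩, ?_⟩, 0, ?_⟩⟩
        · show g ⟨x, hxW⟩ = 0
          show W₁.mkQ x = 0
          exact (Submodule.Quotient.mk_eq_zero W₁).mpr hx
        · intro heq
          apply hx0
          exact congrArg Subtype.val (congrArg Subtype.val heq)
      rw [hrg, hgr, finrank_restrict, hrank] at hrn
      omega
    obtain ⟨U, hU1, hU2⟩ := IH _ hWbrank (V ⧸ W₁) Wb rfl hquot'
    set Ub := U.comap W₁.mkQ with hUb
    have hW₁leUb : W₁ ≤ Ub := by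
      intro x hx
      show W₁.mkQ x ∈ U
      have h0 : W₁.mkQ x = 0 := (Submodule.Quotient.mk_eq_zero W₁).mpr hx
      rw [h0]
      exact U.zero_mem
    have hWinfUb : W ⊓ Ub = W₁ := by
      refine le_antisymm ?_ (le_inf hW₁lt.le hW₁leUb)
      rintro x ⟨hxW, hxU⟩
      have : W₁.mkQ x ∈ Wb ⊓ U := ⟨⟨x, hxW, rfl⟩, hxU⟩
      rw [hU1] at this
      exact (Submodule.Quotient.mk_eq_zero W₁).mp this
    have hWsupUb : W ⊔ Ub = ⊤ := by
      rw [eq_top_iff]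
      intro v _
      have : W₁.mkQ v ∈ Wb ⊔ U := hU2 ▸ Submodule.mem_top
      obtain ⟨y, hy, z, hz, hyz⟩ := Submodule.mem_sup.mp this
      obtain ⟨w, hw, rfl⟩ := hy
      have hvw : v - w ∈ Ub := by
        show W₁.mkQ (v - w) ∈ U
        rw [map_sub]
        have : W₁.mkQ v = W₁.mkQ w + z := hyz.symm
        rw [this]; simpa using hz
      have : v = w + (v - w) := by abel
      rw [this]
      exact Submodule.add_mem_sup hw hvw
    -- now find a complement of W₁ inside Ub
    haveI := fd_sub k H V Ub
    set W₁' := W₁.comap Ub.subtype with hW₁'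
    have hrank₁ : Module.finrank k ↥W₁' = Module.finrank k ↥W₁ :=
      ((Submodule.comapSubtypeEquivOfLe hW₁leUb).restrictScalars k).finrank_eq
    have hlt₁ : Module.finrank k ↥W₁ < n := by
      rw [← hrank, ← finrank_restrict k H V W₁, ← finrank_restrict k H V W]
      exact Submodule.finrank_lt_finrank_of_lt (restrict_lt k H V hW₁lt)
    -- trivial quotient for Ub ⧸ W₁'
    have htriv' : IsTrivialRep k H (↥Ub ⧸ W₁') := by
      let g2 : ↥Ub →ₗ[H] V ⧸ W₁ := W₁.mkQ ∘ₗ Ub.subtype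
      have hker2 : LinearMap.ker g2 = W₁' := by
        ext x
        show W₁.mkQ x.1 = 0 ↔ (x : V) ∈ W₁
        exact Submodule.Quotient.mk_eq_zero W₁
      have hrg2 : LinearMap.range g2 = U := by
        ext x
        constructor
        · rintro ⟨⟨y, hy⟩, rfl⟩; exact hy
        · intro hx
          obtain ⟨y, rfl⟩ := W₁.mkQ_surjective x
          exact ⟨⟨y, hx⟩, rfl⟩
      have hcompl : IsCompl Wb U := ⟨disjoint_iff.mpr hU1, codisjoint_iff.mpr hU2⟩
      refine trivial_of_equiv k H _ _ ?_ hquot'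
      exact (Submodule.quotEquivOfEq _ _ hker2.symm).trans
        ((g2.quotKerEquivRange).trans ((LinearEquiv.ofEq _ _ hrg2).trans
          (Submodule.quotientEquivOfIsCompl Wb U hcompl).symm))
    obtain ⟨X', hX'1, hX'2⟩ := IH _ (hrank₁ ▸ hlt₁) ↥Ub W₁' rfl htriv'
    set X := X'.map Ub.subtype with hX
    have hXle : X ≤ Ub := by
      rintro _ ⟨y, hy, rfl⟩; exact y.2
    have hmapW₁' : W₁'.map Ub.subtype = W₁ := by
      rw [hW₁', Submodule.map_comap_subtype]
      exact inf_eq_right.mpr hW₁leUb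
    refine ⟨X, ?_, ?_⟩
    · rw [eq_bot_iff]
      rintro x ⟨hxW, hxX⟩
      have hxUb : x ∈ Ub := hXle hxX
      have hxW₁ : x ∈ W₁ := hWinfUb ▸ (⟨hxW, hxUb⟩ : x ∈ W ⊓ Ub)
      obtain ⟨y, hy, rfl⟩ := hxX
      have hyW₁' : y ∈ W₁' := hxW₁
      have : y ∈ W₁' ⊓ X' := ⟨hyW₁', hy⟩
      rw [hX'1] at this
      have hy0 : y = 0 := (Submodule.mem_bot H).mp this
      simp [hy0]
    · have hUbeq : Ub = W₁ ⊔ X := by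
        rw [hX, ← hmapW₁', ← Submodule.map_sup, hX'2, Submodule.map_top,
          Submodule.range_subtype]
      rw [eq_top_iff, ← hWsupUb]
      apply sup_le (le_sup_left)
      rw [hUbeq]
      exact sup_le (le_trans hW₁lt.le le_sup_left) le_sup_right

end Helpers

/-- under the Casimir hypotheses, any submodule `W` of a finite-dimensional
module `V` with trivial quotient `V ⧸ W` has a complement. -/
theorem complement_of_trivial_quot (k H : Type u) [Field k] [Ring H]
    [HopfAlgebra k H] (c : H) (hc : ∀ h : H, c * h = h * c)
    (hCasimir : ∀ (V : Type u) [AddCommGroup V] [Module k V] [Module H V]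
      [IsScalarTower k H V] [FiniteDimensional k V] [IsSimpleModule H V],
      (∀ v : V, c • v = 0) ↔ IsTrivialRep k H V)
    (hExt : ∀ (E : Type u) [AddCommGroup E] [Module k E] [Module H E]
      [IsScalarTower k H E] [FiniteDimensional k E] (W : Submodule H E),
      IsTrivialRep k H W → IsTrivialRep k H (E ⧸ W) →
      ∃ W' : Submodule H E, W ⊓ W' = ⊥ ∧ W ⊔ W' = ⊤)
    (V : Type u) [AddCommGroup V] [Module k V] [Module H V] [IsScalarTower k H V]
    [FiniteDimensional k V] (W : Submodule H V) (hquot : IsTrivialRep k H (V ⧸ W)) :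
    ∃ W' : Submodule H V, W ⊓ W' = ⊥ ∧ W ⊔ W' = ⊤ :=
  aux k H c hc hCasimir hExt (Module.finrank k ↥W) V W rfl hquot
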